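/- Let k be a totally real number field of degree d ≥ 2 with real embeddings v₁, …, v_d : k → ℝ. Then there exists an algebraic integer θ ∈ 𝓞_k such that 1 < v₁(θ) ≤ 2^{d−1}·√|Δ_k| and |v_j(θ)| ≤ 1/2 for all j ≥ 2; moreover any such θ satisfies |N_{k/ℚ}(1 − θ)| ≤ 3^{d−1}·√|Δ_k| + (3/2)^{d−1}. -/

import Mathlib

open NumberField

section Aux
open NumberField.InfinitePlace MeasureTheory NumberField.mixedEmbedding ENNReal
open scoped Classical NNReal

variable {k : Type} [Field k] [NumberField k]

private lemma stmt5_allreal (htr : ∀ φ : k →+* ℂ, ∀ x : k, (φ x).im = 0) :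
    ∀ w : InfinitePlace k, IsReal w := by
  intro w
  rw [InfinitePlace.isReal_iff, NumberField.ComplexEmbedding.isReal_iff]
  ext x
  simpa [Complex.ext_iff, NumberField.ComplexEmbedding.conjugate_coe_eq] using (by simp [htr _ x])

private noncomputable def stmt5W (v : k →+* ℝ) : InfinitePlace k :=
  InfinitePlace.mk ((Complex.ofRealHom : ℝ →+* ℂ).comp v)

private lemma stmt5W_apply (v : k →+* ℝ) (x : k) : stmt5W v x = |v x| := by
  rw [stmt5W, InfinitePlace.apply]
  simp

private lemma stmt5W_inj : Function.Injective (stmt5W (k := k)) := by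
  intro a b h
  rw [stmt5W, stmt5W, mk_eq_iff] at h
  have hc : ∀ c : k →+* ℝ, ComplexEmbedding.conjugate ((Complex.ofRealHom : ℝ →+* ℂ).comp c)
      = (Complex.ofRealHom : ℝ →+* ℂ).comp c := by
    intro c; ext x; simp [ComplexEmbedding.conjugate_coe_eq]
  rcases h with h | h
  · ext x
    have := congrArg (fun f => (f : k →+* ℂ) x) h
    simpa using this
  · rw [hc] at h
    ext x
    have := congrArg (fun f => (f : k →+* ℂ) x) h
    simpa using this

variable (k)

private lemma stmt5_mink_eq (h0 : nrComplexPlaces k = 0) :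
    minkowskiBound k 1 =
      (NNReal.sqrt ‖discr k‖₊ : ℝ≥0∞) * 2 ^ (Module.finrank ℚ k) := by
  rw [minkowskiBound, volume_fundamentalDomain_fractionalIdealLatticeBasis,
    volume_fundamentalDomain_latticeBasis, h0, Units.val_one, FractionalIdeal.absNorm_one,
    Rat.cast_one, ENNReal.ofReal_one, one_mul, pow_zero, one_mul, mixedEmbedding.finrank]

private lemma stmt5_vol_eq (h0 : nrComplexPlaces k = 0)
    (hm : ∀ w : InfinitePlace k, mult w = 1) (f : InfinitePlace k → NNReal) :
    volume (convexBodyLT k f) = (2 : ℝ≥0∞) ^ (Module.finrank ℚ k) * ∏ w, (f w : ℝ≥0∞) := by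
  rw [convexBodyLT_volume]
  have hcard : nrRealPlaces k = Module.finrank ℚ k := by
    have h := InfinitePlace.card_add_two_mul_card_eq_rank k
    rw [h0] at h; omega
  rw [convexBodyLTFactor, h0, hcard]
  simp only [pow_zero, mul_one, hm, pow_one]
  push_cast
  ring

private lemma stmt5_exists_theta_n (h0 : nrComplexPlaces k = 0)
    (hm : ∀ w : InfinitePlace k, mult w = 1)
    (hcard : Fintype.card (InfinitePlace k) = Module.finrank ℚ k)
    (hd : 2 ≤ Module.finrank ℚ k) (w₀ : InfinitePlace k) (n : ℕ) :
    ∃ θ : 𝓞 k, θ ≠ 0 ∧ ∀ w : InfinitePlace k,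
      w θ < (if w = w₀ then 2 ^ (Module.finrank ℚ k - 1) * NNReal.sqrt ‖discr k‖₊
        + ((n : ℝ≥0) + 1)⁻¹ else 1/2 : ℝ≥0) := by
  set d := Module.finrank ℚ k with hdd
  set S : ℝ≥0 := NNReal.sqrt ‖discr k‖₊ with hS
  set ε : ℝ≥0 := ((n : ℝ≥0) + 1)⁻¹ with hε
  have hεpos : 0 < ε := by positivity
  set f : InfinitePlace k → ℝ≥0 := fun w => if w = w₀ then 2 ^ (d - 1) * S + ε else 1/2 with hf
  refine exists_ne_zero_mem_ringOfIntegers_lt k (f := f) ?_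
  rw [stmt5_mink_eq k h0, stmt5_vol_eq k h0 hm]
  rw [← ENNReal.coe_finset_prod]
  have h2 : ((2 : ℝ≥0∞)) ^ d = ((2 ^ d : ℝ≥0) : ℝ≥0∞) := by push_cast; rfl
  rw [h2, ← ENNReal.coe_mul, ← ENNReal.coe_mul, ENNReal.coe_lt_coe]
  have hprod : ∏ w, f w = (2 ^ (d - 1) * S + ε) * (1/2) ^ (d - 1) := by
    rw [← Finset.mul_prod_erase Finset.univ f (Finset.mem_univ w₀)]
    rw [hf]
    simp only [if_pos rfl]
    congr 1
    rw [Finset.prod_congr rfl (fun w hw => if_neg (Finset.ne_of_mem_erase hw)),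
      Finset.prod_const, Finset.card_erase_of_mem (Finset.mem_univ w₀), Finset.card_univ, hcard]
  rw [hprod, ← NNReal.coe_lt_coe]
  push_cast
  have h1 : (2:ℝ) ^ (d-1) * (1/2) ^ (d-1) = 1 := by rw [← mul_pow]; norm_num
  have h3 : (0:ℝ) < (1/2) ^ (d-1) := by positivity
  have h4 : (0:ℝ) < (ε : ℝ) := hεpos
  have h5 : (0:ℝ) < 2 ^ d := by positivity
  have heq : Real.sqrt ‖(discr k : ℤ)‖ = (S : ℝ) := by
    rw [hS]; simp [Real.coe_sqrt]
  rw [heq]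
  have key : (2:ℝ) ^ (d-1) * (S:ℝ) * (1/2) ^ (d-1) = S := by
    rw [mul_comm ((2:ℝ)^(d-1)) (S:ℝ), mul_assoc, h1, mul_one]
  have hre : (2:ℝ)^d * ((2^(d-1)*S+(ε:ℝ))*(1/2)^(d-1))
      = 2^d * (2^(d-1)*S*(1/2)^(d-1)) + 2^d * ((ε:ℝ)*(1/2)^(d-1)) := by ring
  rw [hre, key]
  nlinarith [mul_pos h5 (mul_pos h4 h3)]

private lemma stmt5_exists_theta (h0 : nrComplexPlaces k = 0)
    (hm : ∀ w : InfinitePlace k, mult w = 1)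
    (hcard : Fintype.card (InfinitePlace k) = Module.finrank ℚ k)
    (hd : 2 ≤ Module.finrank ℚ k) (w₀ : InfinitePlace k) :
    ∃ θ : 𝓞 k, θ ≠ 0 ∧
      w₀ (θ : k) ≤ 2 ^ (Module.finrank ℚ k - 1) * Real.sqrt |(discr k : ℝ)| ∧
      ∀ w : InfinitePlace k, w ≠ w₀ → w (θ : k) < 1/2 := by
  set d := Module.finrank ℚ k with hdd
  set S : ℝ≥0 := NNReal.sqrt ‖discr k‖₊ with hS
  set B : ℝ≥0 := 2 ^ (d - 1) * S with hB
  have hnn : ((‖discr k‖₊ : ℝ)) = |(discr k : ℝ)| := by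
    rw [coe_nnnorm, Int.norm_eq_abs]
  have hSR : (S : ℝ) = Real.sqrt |(discr k : ℝ)| := by
    rw [hS, Real.coe_sqrt, hnn]
  choose F hF1 hF2 using stmt5_exists_theta_n k h0 hm hcard hd w₀
  set T : Set (𝓞 k) :=
    {θ : 𝓞 k | (θ : k) ∈ {x : k | IsIntegral ℤ x ∧ ∀ φ : k →+* ℂ, ‖φ x‖ ≤ (B : ℝ) + 1}} with hTdef
  have hT : T.Finite := by
    apply Set.Finite.preimage _ (NumberField.Embeddings.finite_of_norm_le k ℂ ((B : ℝ) + 1))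
    exact Set.injOn_of_injective RingOfIntegers.coe_injective
  have hmem : ∀ n, F n ∈ T := by
    intro n
    refine ⟨RingOfIntegers.isIntegral_coe _, fun φ => ?_⟩
    have h := hF2 n (InfinitePlace.mk φ)
    have happ : ‖φ ((F n : k))‖ = (InfinitePlace.mk φ) ((F n : k)) := rfl
    rw [happ]
    refine h.le.trans ?_
    have key : (if InfinitePlace.mk φ = w₀ then
        2 ^ (Module.finrank ℚ k - 1) * NNReal.sqrt ‖discr k‖₊ + ((n : ℝ≥0) + 1)⁻¹
        else 1/2 : ℝ≥0) ≤ B + 1 := by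
      split_ifs
      · show B + ((n : ℝ≥0) + 1)⁻¹ ≤ B + 1
        refine add_le_add_right ?_ B
        rw [inv_le_one_iff₀]
        right
        simp
      · exact le_trans (by norm_num) (le_add_self (a := (1 : ℝ≥0)) (b := B))
    exact_mod_cast key
  haveI : Finite T := hT.to_subtype
  obtain ⟨⟨θ, hθmem⟩, hinf⟩ := Finite.exists_infinite_fiber
    (fun n : ℕ => (⟨F n, hmem n⟩ : T))
  rw [Set.infinite_coe_iff] at hinf
  have hinf' : {n : ℕ | F n = θ}.Infinite := by
    refine hinf.mono ?_
    intro n hn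
    simpa [Subtype.ext_iff] using hn
  obtain ⟨n₀, hn₀⟩ := hinf'.nonempty
  refine ⟨θ, hn₀ ▸ hF1 n₀, ?_, ?_⟩
  · rw [← hSR]
    have hcast : ((B : ℝ≥0) : ℝ) = 2 ^ (d - 1) * (S : ℝ) := by rw [hB]; push_cast; ring
    rw [← hcast]
    refine le_of_forall_pos_le_add (fun δ hδ => ?_)
    obtain ⟨n, hn⟩ := exists_nat_one_div_lt hδ
    obtain ⟨m, hm', hmn⟩ := hinf'.exists_gt n
    have h := hF2 m w₀
    rw [if_pos rfl] at h
    have hmθ : F m = θ := hm'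
    rw [hmθ, ← hdd, ← hS, ← hB] at h
    have h' : w₀ (θ : k) < (B : ℝ) + ((m : ℝ) + 1)⁻¹ := by
      refine lt_of_lt_of_le h (le_of_eq ?_)
      push_cast
      ring
    have hstep : (((m : ℝ) + 1)⁻¹ : ℝ) ≤ 1 / ((n : ℝ) + 1) := by
      rw [one_div]
      refine inv_anti₀ (by positivity) ?_
      have : (n : ℝ) ≤ m := by exact_mod_cast hmn.le
      linarith
    linarith
  · intro w hw
    have h := hF2 n₀ w
    rw [if_neg hw, hn₀] at h
    exact_mod_cast h

end Aux

open NumberField.InfinitePlace in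
open scoped Classical NNReal in
/-- Minkowski-type construction of a Pisot element: for a totally real number field `k` of
degree `d ≥ 2` with real embeddings `v₀, …, v_{d−1}`, there exists `θ ∈ 𝓞_k` with
`1 < v₀(θ) ≤ 2^{d−1}√|Δ_k|` and `|v_j(θ)| ≤ 1/2` for `j ≠ 0`; moreover any such `θ`
satisfies `|N_{k/ℚ}(1 − θ)| ≤ 3^{d−1}√|Δ_k| + (3/2)^{d−1}`. -/
theorem stmt_5 (k : Type) [Field k] [NumberField k]
    (htr : ∀ φ : k →+* ℂ, ∀ x : k, (φ x).im = 0)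
    (hd : 2 ≤ Module.finrank ℚ k)
    (v : Fin (Module.finrank ℚ k) → (k →+* ℝ)) (hv : Function.Bijective v) :
    (∃ θ : 𝓞 k,
        1 < v ⟨0, by omega⟩ (θ : k) ∧
        v ⟨0, by omega⟩ (θ : k) ≤
          2 ^ (Module.finrank ℚ k - 1) * Real.sqrt |(NumberField.discr k : ℝ)| ∧
        ∀ j, j ≠ ⟨0, by omega⟩ → |v j (θ : k)| ≤ 1 / 2) ∧
    ∀ θ : 𝓞 k,
      (1 < v ⟨0, by omega⟩ (θ : k) ∧
        v ⟨0, by omega⟩ (θ : k) ≤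
          2 ^ (Module.finrank ℚ k - 1) * Real.sqrt |(NumberField.discr k : ℝ)| ∧
        ∀ j, j ≠ ⟨0, by omega⟩ → |v j (θ : k)| ≤ 1 / 2) →
      |((Algebra.norm ℚ (1 - (θ : k)) : ℚ) : ℝ)| ≤
        3 ^ (Module.finrank ℚ k - 1) * Real.sqrt |(NumberField.discr k : ℝ)|
          + (3 / 2) ^ (Module.finrank ℚ k - 1) := by
  classical
  have hall := stmt5_allreal htr
  have h0 : nrComplexPlaces k = 0 := by
    rw [Fintype.card_eq_zero_iff]
    exact ⟨fun w => (not_isReal_iff_isComplex.mpr w.2) (hall w.1)⟩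
  have hm : ∀ w : InfinitePlace k, mult w = 1 := fun w => by rw [mult, if_pos (hall w)]
  have hcard : Fintype.card (InfinitePlace k) = Module.finrank ℚ k := by
    have h := InfinitePlace.card_add_two_mul_card_eq_rank k
    rw [h0] at h
    rw [card_eq_nrRealPlaces_add_nrComplexPlaces, h0]
    omega
  have hd0 : 0 < Module.finrank ℚ k := by omega
  set i0 : Fin (Module.finrank ℚ k) := ⟨0, hd0⟩ with hi0
  have hWinj : Function.Injective (fun j => stmt5W (v j)) := fun a b h => hv.1 (stmt5W_inj h)
  have hWbij : Function.Bijective (fun j => stmt5W (v j)) :=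
    (Fintype.bijective_iff_injective_and_card _).mpr ⟨hWinj, by rw [Fintype.card_fin, hcard]⟩
  have sqrt_nonneg : (0:ℝ) ≤ Real.sqrt |(NumberField.discr k : ℝ)| := Real.sqrt_nonneg _
  -- Second part
  have key2 : ∀ θ : 𝓞 k,
      (1 < v i0 (θ : k) ∧
        v i0 (θ : k) ≤
          2 ^ (Module.finrank ℚ k - 1) * Real.sqrt |(NumberField.discr k : ℝ)| ∧
        ∀ j, j ≠ i0 → |v j (θ : k)| ≤ 1 / 2) →
      |((Algebra.norm ℚ (1 - (θ : k)) : ℚ) : ℝ)| ≤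
        3 ^ (Module.finrank ℚ k - 1) * Real.sqrt |(NumberField.discr k : ℝ)|
          + (3 / 2) ^ (Module.finrank ℚ k - 1) := by
    rintro θ ⟨h1, h2, h3⟩
    have hprod : |((Algebra.norm ℚ (1 - (θ : k)) : ℚ) : ℝ)| = ∏ j, |1 - v j (θ : k)| := by
      rw [show |((Algebra.norm ℚ (1 - (θ : k)) : ℚ) : ℝ)|
          = ((|Algebra.norm ℚ (1 - (θ : k))| : ℚ) : ℝ) from (Rat.cast_abs _).symm,
        ← InfinitePlace.prod_eq_abs_norm (1 - (θ : k))]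
      refine (Fintype.prod_bijective (fun j => stmt5W (v j)) hWbij
        (fun j => |1 - v j (θ : k)|)
        (fun w => w (1 - (θ : k)) ^ mult w) (fun j => ?_)).symm
      simp only [hm, pow_one, stmt5W_apply, map_sub, map_one]
    rw [hprod, ← Finset.mul_prod_erase Finset.univ _ (Finset.mem_univ i0)]
    have hfirst : |1 - v i0 (θ : k)| ≤
        2 ^ (Module.finrank ℚ k - 1) * Real.sqrt |(NumberField.discr k : ℝ)| := by
      rw [abs_sub_comm, abs_of_nonneg (by linarith : (0:ℝ) ≤ v i0 (θ : k) - 1)]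
      linarith
    have herase : ∏ j ∈ Finset.univ.erase i0, |1 - v j (θ : k)| ≤
        (3/2 : ℝ) ^ (Module.finrank ℚ k - 1) := by
      refine le_trans (Finset.prod_le_prod (g := fun _ => (3/2 : ℝ))
        (fun j _ => abs_nonneg _) (fun j hj => ?_)) ?_
      · have hb := h3 j (Finset.ne_of_mem_erase hj)
        have ht : |1 - v j (θ : k)| ≤ |(1:ℝ)| + |v j (θ : k)| := abs_sub _ _
        rw [abs_one] at ht
        linarith
      · rw [Finset.prod_const, Finset.card_erase_of_mem (Finset.mem_univ i0),
          Finset.card_univ, Fintype.card_fin]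
    calc |1 - v i0 (θ : k)| * ∏ j ∈ Finset.univ.erase i0, |1 - v j (θ : k)|
        ≤ (2 ^ (Module.finrank ℚ k - 1) * Real.sqrt |(NumberField.discr k : ℝ)|)
          * (3/2 : ℝ) ^ (Module.finrank ℚ k - 1) :=
          mul_le_mul hfirst herase (Finset.prod_nonneg (fun j _ => abs_nonneg _))
            (by positivity)
      _ = 3 ^ (Module.finrank ℚ k - 1) * Real.sqrt |(NumberField.discr k : ℝ)| := by
          rw [mul_right_comm, ← mul_pow]
          norm_num
      _ ≤ 3 ^ (Module.finrank ℚ k - 1) * Real.sqrt |(NumberField.discr k : ℝ)|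
          + (3 / 2) ^ (Module.finrank ℚ k - 1) := le_add_of_nonneg_right (by positivity)
  refine ⟨?_, fun θ h => key2 θ h⟩
  -- Existence part
  obtain ⟨θ, hθ0, hle, hlt⟩ := stmt5_exists_theta k h0 hm hcard hd (stmt5W (v i0))
  have ha0 : (0:ℝ) ≤ stmt5W (v i0) (θ : k) := apply_nonneg _ _
  have hlow : (2:ℝ) ≤ stmt5W (v i0) (θ : k) := by
    have hn1 : (1:ℝ) ≤ ∏ w, w (θ : k) ^ mult w := by
      rw [InfinitePlace.prod_eq_abs_norm, ← Algebra.coe_norm_int, ← Int.cast_one, ← Int.cast_abs,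
        Rat.cast_intCast, Int.cast_le]
      exact Int.one_le_abs (Algebra.norm_ne_zero_iff.mpr hθ0)
    have hsplit : ∏ w, w (θ : k) ^ mult w
        = stmt5W (v i0) (θ : k) * ∏ w ∈ Finset.univ.erase (stmt5W (v i0)), w (θ : k) := by
      simp_rw [hm, pow_one]
      exact (Finset.mul_prod_erase Finset.univ _ (Finset.mem_univ _)).symm
    have hP : ∏ w ∈ Finset.univ.erase (stmt5W (v i0)), w (θ : k)
        ≤ (1/2 : ℝ) ^ (Module.finrank ℚ k - 1) := by
      refine le_trans (Finset.prod_le_prod (fun w _ => apply_nonneg _ _)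
        (fun w hw => (hlt w (Finset.ne_of_mem_erase hw)).le)) ?_
      rw [Finset.prod_const, Finset.card_erase_of_mem (Finset.mem_univ _),
        Finset.card_univ, hcard]
    have hc1 : (1/2:ℝ) ^ (Module.finrank ℚ k - 1) * 2 ^ (Module.finrank ℚ k - 1) = 1 := by
      rw [← mul_pow]; norm_num
    have h2d : (2:ℝ) ≤ 2 ^ (Module.finrank ℚ k - 1) := by
      calc (2:ℝ) = 2 ^ 1 := (pow_one 2).symm
        _ ≤ 2 ^ (Module.finrank ℚ k - 1) := by
            apply pow_le_pow_right₀ (by norm_num) (by omega)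
    have h1a : 1 ≤ stmt5W (v i0) (θ : k) * (1/2:ℝ) ^ (Module.finrank ℚ k - 1) := by
      rw [hsplit] at hn1
      exact le_trans hn1 (mul_le_mul_of_nonneg_left hP ha0)
    nlinarith [mul_le_mul_of_nonneg_right h1a (by positivity : (0:ℝ) ≤ (2:ℝ) ^ (Module.finrank ℚ k - 1))]
  set θ' : 𝓞 k := if 0 ≤ v i0 (θ : k) then θ else -θ with hθ'
  have hv0 : v i0 (θ' : k) = |v i0 (θ : k)| := by
    rw [hθ']
    split_ifs with hsgn
    · rw [abs_of_nonneg hsgn]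
    · push_cast
      rw [map_neg, abs_of_neg (lt_of_not_ge hsgn)]
  have habs : ∀ j, |v j (θ' : k)| = |v j (θ : k)| := by
    intro j
    rw [hθ']
    split_ifs with hsgn
    · rfl
    · push_cast
      rw [map_neg, abs_neg]
  have hWa0 : stmt5W (v i0) (θ : k) = |v i0 (θ : k)| := stmt5W_apply _ _
  refine ⟨θ', ?_, ?_, ?_⟩
  · rw [hv0]
    rw [hWa0] at hlow
    linarith
  · rw [hv0, ← hWa0]
    exact hle
  · intro j hj
    rw [habs j]
    have hne : stmt5W (v j) ≠ stmt5W (v i0) := fun hE => hj (hv.1 (stmt5W_inj hE))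
    have := hlt _ hne
    rw [stmt5W_apply] at this
    linarith
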